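/- Let (R, m) be a Noetherian local ring of dimension d ≥ 1 with infinite residue field, I an m-primary ideal, and J a minimal reduction of I generated by a system of parameters x₁,…,x_d. Then for every n ≥ 1, ν(Iⁿ) ≤ binom(d+n−2, d−2) + λ(R/J) · binom(d+n−2, d−1). -/

import Mathlib

open Filter IsLocalRing Polynomial

/-- The length of an `R`-module `M`, as the Krull dimension of its submodule lattice. -/
noncomputable def mLength (R : Type*) (M : Type*) [CommRing R] [AddCommGroup M] [Module R M] :
    WithBot ℕ∞ :=
  Order.krullDim (Submodule R M)

/-- The minimal number of generators of a submodule. -/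
noncomputable def nu {R M : Type*} [CommRing R] [AddCommGroup M] [Module R M]
    (N : Submodule R M) : ℕ :=
  sInf {n | ∃ s : Finset M, s.card = n ∧ Submodule.span R (s : Set M) = N}

/-- `J` is a reduction of `I`: `J ⊆ I` and `I^(n+1) = J·Iⁿ` for some `n`
(equivalently, `I` is integral over `J`). -/
def IsReduction {R : Type*} [CommRing R] (J I : Ideal R) : Prop :=
  J ≤ I ∧ ∃ n, I ^ (n + 1) = J * I ^ n

/-- The reduction number of `I` with respect to `J`: the least `s` with `I^(s+1) = J·I^s`. -/
noncomputable def redNum {R : Type*} [CommRing R] (J I : Ideal R) : ℕ :=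
  sInf {s | I ^ (s + 1) = J * I ^ s}

/-- `Q` is a minimal reduction of the `m`-primary ideal `I` in a `d`-dimensional local ring:
a reduction of `I` generated by `d` elements (a parameter ideal). -/
def IsMinimalReduction {R : Type*} [CommRing R] (d : ℕ) (Q I : Ideal R) : Prop :=
  IsReduction Q I ∧ ∃ s : Finset R, s.card = d ∧ Q = Ideal.span (s : Set R)

/-- `HasMultiplicity I d e0` : for `n ≫ 0`,
`λ(R/Iⁿ) = e0·C(n+d−1, d) + (terms of degree < d in n)`;
i.e. `e0 = e₀(I)` is the Hilbert–Samuel multiplicity of `I`. -/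
def HasMultiplicity {R : Type*} [CommRing R] (I : Ideal R) (d : ℕ) (e0 : ℤ) : Prop :=
  ∃ (p : Polynomial ℚ) (lam : ℕ → ℕ), p.degree < (d : ℕ) ∧
    (∀ n, mLength R (R ⧸ I ^ n) = lam n) ∧
    ∀ᶠ n : ℕ in atTop,
      (lam n : ℚ) = e0 * ((n + d - 1).choose d) + p.eval (n : ℚ)

/-- `HasHilbertCoeffs I d e0 e1` : for `n ≫ 0`,
`λ(R/Iⁿ) = e0·C(n+d−1, d) − e1·C(n+d−2, d−1) + (terms of degree < d−1 in n)`;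
i.e. `e0 = e₀(I)` and `e1 = e₁(I)` are the first two Hilbert coefficients of `I`. -/
def HasHilbertCoeffs {R : Type*} [CommRing R] (I : Ideal R) (d : ℕ) (e0 e1 : ℤ) : Prop :=
  ∃ (p : Polynomial ℚ) (lam : ℕ → ℕ), p.degree < ((d - 1 : ℕ) : WithBot ℕ) ∧
    (∀ n, mLength R (R ⧸ I ^ n) = lam n) ∧
    ∀ᶠ n : ℕ in atTop,
      (lam n : ℚ) = e0 * ((n + d - 1).choose d) - e1 * ((n + d - 2).choose (d - 1))
        + p.eval (n : ℚ)

/-- `IsFiberMult f d f0` : the function `f` (e.g. `n ↦ ν(Jⁿ)`) agrees for `n ≫ 0` with a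
polynomial of degree `d − 1` in `n` with normalized leading coefficient `f0`. -/
def IsFiberMult (f : ℕ → ℕ) (d : ℕ) (f0 : ℕ) : Prop :=
  ∃ p : Polynomial ℚ, p.degree < ((d - 1 : ℕ) : WithBot ℕ) ∧
    ∀ᶠ n : ℕ in atTop,
      (f n : ℚ) = f0 * ((n + d - 2).choose (d - 1)) + p.eval (n : ℚ)

/-- `f0 = f₀(J)` is the multiplicity of the special fiber ring `⊕ Jⁿ/mJⁿ`, i.e. the
normalized leading coefficient of the polynomial giving `ν(Jⁿ)` for `n ≫ 0`. -/
def HasFiberMult {R : Type*} [CommRing R] (J : Ideal R) (d : ℕ) (f0 : ℕ) : Prop :=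
  IsFiberMult (fun n => nu (J ^ n)) d f0

section Infra

open Order Submodule

lemma wb_add_one_le {c : ℕ} {t : WithBot ℕ∞} (h : (c : WithBot ℕ∞) < t) :
    ((c + 1 : ℕ) : WithBot ℕ∞) ≤ t := by
  cases t with
  | bot => simp at h
  | coe t => cases t with
    | top => exact le_top
    | coe m =>
      have : c < m := by exact_mod_cast h
      exact_mod_cast Nat.succ_le_of_lt this

lemma krullDim_le_of_forall {α : Type*} [Preorder α] {x : WithBot ℕ∞}
    (h : ∀ p : LTSeries α, (p.length : WithBot ℕ∞) ≤ x) : Order.krullDim α ≤ x :=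
  iSup_le h

lemma exists_ltseries_of_le {α : Type*} [Preorder α] {a : ℕ}
    (h : (a : WithBot ℕ∞) ≤ Order.krullDim α) : ∃ p : LTSeries α, p.length = a := by
  have hex : ∃ p : LTSeries α, a ≤ p.length := by
    by_contra hc
    push_neg at hc
    rcases Nat.eq_zero_or_pos a with rfl | ha
    · have h1 : IsEmpty (LTSeries α) := ⟨fun p => absurd (hc p) (by omega)⟩
      have h2 : IsEmpty α := ⟨fun y => h1.false (RelSeries.singleton _ y)⟩
      rw [Order.krullDim_eq_bot] at h
      simp at h
    · have h1 : Order.krullDim α ≤ ((a - 1 : ℕ) : WithBot ℕ∞) :=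
        krullDim_le_of_forall fun p => by
          exact_mod_cast Nat.le_sub_one_of_lt (hc p)
      have h2 := le_trans h h1
      have h3 : a ≤ a - 1 := by exact_mod_cast h2
      omega
  obtain ⟨p, hp⟩ := hex
  refine ⟨p.take ⟨a, by omega⟩, ?_⟩
  simp [RelSeries.take]

lemma ltseries_prod_decomp {α β : Type*} [PartialOrder α] [PartialOrder β]
    (p : LTSeries (α × β)) : ∃ (q : LTSeries α) (s : LTSeries β),
      q.last ≤ p.last.1 ∧ s.last ≤ p.last.2 ∧ p.length = q.length + s.length := by
  obtain ⟨n, hn⟩ : ∃ n, p.length = n := ⟨_, rfl⟩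
  induction n generalizing p with
  | zero =>
    exact ⟨RelSeries.singleton _ p.last.1, RelSeries.singleton _ p.last.2, le_refl _,
      le_refl _, by simpa using hn⟩
  | succ n ih =>
    have hne : p.length ≠ 0 := by omega
    have he : p.eraseLast.length = p.length - 1 := by simp [RelSeries.eraseLast]
    obtain ⟨q, s, hq, hs, hlen⟩ := ih p.eraseLast (by omega)
    have hrel : p.eraseLast.last < p.last := p.eraseLast_last_rel_last hne
    rcases Prod.lt_iff.mp hrel with ⟨h1, h2⟩ | ⟨h1, h2⟩
    · refine ⟨q.snoc p.last.1 (lt_of_le_of_lt hq h1), s, ?_, le_trans hs h2, ?_⟩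
      · simp
      · rw [RelSeries.snoc_length]; omega
    · refine ⟨q, s.snoc p.last.2 (lt_of_le_of_lt hs h2), le_trans hq h1, ?_, ?_⟩
      · simp
      · rw [RelSeries.snoc_length]; omega

lemma krullDim_prod_le {α β : Type*} [PartialOrder α] [PartialOrder β] {a b : ℕ}
    (ha : Order.krullDim α ≤ (a : WithBot ℕ∞)) (hb : Order.krullDim β ≤ (b : WithBot ℕ∞)) :
    Order.krullDim (α × β) ≤ ((a + b : ℕ) : WithBot ℕ∞) := by
  refine krullDim_le_of_forall fun p => ?_
  obtain ⟨q, s, _, _, hlen⟩ := ltseries_prod_decomp p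
  have h1 : (q.length : WithBot ℕ∞) ≤ a := le_trans (LTSeries.length_le_krullDim q) ha
  have h2 : (s.length : WithBot ℕ∞) ≤ b := le_trans (LTSeries.length_le_krullDim s) hb
  have h1' : q.length ≤ a := by exact_mod_cast h1
  have h2' : s.length ≤ b := by exact_mod_cast h2
  exact_mod_cast (by omega : p.length ≤ a + b)

variable {R : Type*} [CommRing R]
variable {M : Type*} [AddCommGroup M] [Module R M]
variable {M₂ : Type*} [AddCommGroup M₂] [Module R M₂]

lemma mLength_nonneg (M : Type*) [AddCommGroup M] [Module R M] : 0 ≤ mLength R M :=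
  Order.krullDim_nonneg

lemma exists_nat_of_mLength_le {c : ℕ} (h : mLength R M ≤ (c : ℕ)) :
    ∃ a : ℕ, a ≤ c ∧ mLength R M = (a : ℕ) := by
  have h0 : (0 : WithBot ℕ∞) ≤ mLength R M := mLength_nonneg M
  cases hM : mLength R M with
  | bot => rw [hM] at h0; simp at h0
  | coe t => cases t with
    | top =>
      rw [hM] at h
      exact absurd h (by
        intro hh
        have : ((⊤ : ℕ∞) : WithBot ℕ∞) ≤ ((c : ℕ∞) : WithBot ℕ∞) := by exact_mod_cast hh
        have : (⊤ : ℕ∞) ≤ (c : ℕ∞) := by exact_mod_cast this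
        simp at this)
    | coe a =>
      refine ⟨a, ?_, by exact_mod_cast rfl⟩
      rw [hM] at h
      exact_mod_cast h

lemma mLength_le_of_injective (f : M →ₗ[R] M₂) (hf : Function.Injective f) :
    mLength R M ≤ mLength R M₂ := by
  refine Order.krullDim_le_of_strictMono (Submodule.map f) ?_
  refine Monotone.strictMono_of_injective (fun p q hpq => Submodule.map_mono hpq) ?_
  intro p q hpq
  have := congrArg (Submodule.comap f) hpq
  rwa [Submodule.comap_map_eq, Submodule.comap_map_eq, LinearMap.ker_eq_bot.mpr hf,
    sup_bot_eq, sup_bot_eq] at this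

lemma mLength_le_of_surjective (f : M →ₗ[R] M₂) (hf : Function.Surjective f) :
    mLength R M₂ ≤ mLength R M := by
  refine Order.krullDim_le_of_strictMono (Submodule.comap f) ?_
  refine Monotone.strictMono_of_injective (fun p q hpq => Submodule.comap_mono hpq) ?_
  intro p q hpq
  have := congrArg (Submodule.map f) hpq
  rwa [Submodule.map_comap_eq_of_surjective hf, Submodule.map_comap_eq_of_surjective hf] at this

lemma mLength_eq_of_equiv (e : M ≃ₗ[R] M₂) : mLength R M = mLength R M₂ :=
  le_antisymm (mLength_le_of_injective e.toLinearMap e.injective)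
    (mLength_le_of_surjective e.toLinearMap e.surjective)

lemma mLength_mono {A B : Submodule R M} (h : A ≤ B) : mLength R A ≤ mLength R B :=
  mLength_le_of_injective (Submodule.inclusion h) (Submodule.inclusion_injective h)

lemma mLength_submodule_le (A : Submodule R M) : mLength R A ≤ mLength R M :=
  mLength_le_of_injective A.subtype (Submodule.injective_subtype A)

lemma mLength_quot_le (A : Submodule R M) : mLength R (M ⧸ A) ≤ mLength R M :=
  mLength_le_of_surjective A.mkQ A.mkQ_surjective

lemma mLength_subsingleton [Subsingleton M] : mLength R M ≤ 0 := by
  have : Subsingleton (Submodule R M) := ⟨fun p q => by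
    ext y; simp [Subsingleton.elim y 0]⟩
  exact Order.krullDim_nonpos_of_subsingleton

lemma comap_subtype_inf' (N K : Submodule R M) :
    Submodule.comap N.subtype K = Submodule.comap N.subtype (K ⊓ N) := by
  ext y
  simp only [Submodule.mem_comap, Submodule.mem_inf]
  exact ⟨fun h => ⟨h, y.2⟩, fun h => h.1⟩

/-- length of image of a submodule under a linear map equals length of quotient by
the comap of the kernel. -/
lemma mLength_map_eq (f : M →ₗ[R] M₂) (U : Submodule R M) :
    mLength R (U.map f) = mLength R (U ⧸ Submodule.comap U.subtype (LinearMap.ker f)) := by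
  have hker : LinearMap.ker (f.domRestrict U) = Submodule.comap U.subtype (LinearMap.ker f) := by
    ext y; simp [LinearMap.mem_ker]
  have hrange : LinearMap.range (f.domRestrict U) = U.map f := by
    ext y
    simp only [LinearMap.mem_range, Submodule.mem_map, LinearMap.domRestrict_apply]
    constructor
    · rintro ⟨z, hz⟩; exact ⟨z.1, z.2, hz⟩
    · rintro ⟨z, hz, hz2⟩; exact ⟨⟨z, hz⟩, hz2⟩
  rw [← hker, ← hrange]
  exact (mLength_eq_of_equiv (LinearMap.quotKerEquivRange (f.domRestrict U))).symm

end Infra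

section Add
open Order Submodule

variable {R : Type*} [CommRing R]
variable {M : Type*} [AddCommGroup M] [Module R M]
variable {M₂ : Type*} [AddCommGroup M₂] [Module R M₂]

lemma map_strictMono (f : M →ₗ[R] M₂) (hf : Function.Injective f) :
    StrictMono (Submodule.map f) := by
  refine Monotone.strictMono_of_injective (fun p q hpq => Submodule.map_mono hpq) ?_
  intro p q hpq
  have := congrArg (Submodule.comap f) hpq
  rwa [Submodule.comap_map_eq, Submodule.comap_map_eq, LinearMap.ker_eq_bot.mpr hf,
    sup_bot_eq, sup_bot_eq] at this

lemma comap_strictMono (f : M →ₗ[R] M₂) (hf : Function.Surjective f) :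
    StrictMono (Submodule.comap f) := by
  refine Monotone.strictMono_of_injective (fun p q hpq => Submodule.comap_mono hpq) ?_
  intro p q hpq
  have := congrArg (Submodule.map f) hpq
  rwa [Submodule.map_comap_eq_of_surjective hf, Submodule.map_comap_eq_of_surjective hf] at this

lemma le_mLength_add (N : Submodule R M) {a b : ℕ}
    (ha : (a : WithBot ℕ∞) ≤ mLength R N) (hb : (b : WithBot ℕ∞) ≤ mLength R (M ⧸ N)) :
    ((a + b : ℕ) : WithBot ℕ∞) ≤ mLength R M := by
  obtain ⟨p, hp⟩ := exists_ltseries_of_le ha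
  obtain ⟨q, hq⟩ := exists_ltseries_of_le hb
  have hmapsm := map_strictMono N.subtype (Submodule.injective_subtype N)
  have hcomsm := comap_strictMono N.mkQ N.mkQ_surjective
  have hNle : ∀ t : Submodule R (M ⧸ N), N ≤ Submodule.comap N.mkQ t := by
    intro t y hy
    simp only [Submodule.mem_comap]
    have : N.mkQ y = 0 := by
      simp [Submodule.mkQ_apply, Submodule.Quotient.mk_eq_zero, hy]
    rw [this]; exact t.zero_mem
  set F : Fin (a + b + 1) → Submodule R M := fun i =>
    if h : i.val ≤ a then (p ⟨i.val, by omega⟩).map N.subtype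
    else (q ⟨i.val - a, by omega⟩).comap N.mkQ with hF
  have hstep : ∀ i : Fin (a + b), F i.castSucc < F i.succ := by
    intro i
    have hic : (i.castSucc : ℕ) = i.val := rfl
    have his : (i.succ : ℕ) = i.val + 1 := rfl
    by_cases h1 : i.val + 1 ≤ a
    · have h0 : i.val ≤ a := by omega
      rw [hF]
      simp only [hic, his, dif_pos h0, dif_pos h1]
      exact hmapsm (p.step ⟨i.val, by omega⟩)
    · by_cases h0 : i.val ≤ a
      · -- junction : i.val = a, b ≥ 1
        have hia : i.val = a := by omega
        have hb1 : 0 < b := by have := i.2; omega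
        rw [hF]
        simp only [hic, his, dif_pos h0, dif_neg h1]
        have e1 : (p ⟨i.val, by omega⟩).map N.subtype ≤ N := Submodule.map_subtype_le _ _
        have e2 : Submodule.comap N.mkQ (q ⟨0, by omega⟩) <
            Submodule.comap N.mkQ (q ⟨i.val + 1 - a, by omega⟩) := by
          apply hcomsm
          have : i.val + 1 - a = 1 := by omega
          simp only [this]
          exact q.step ⟨0, by omega⟩
        exact lt_of_le_of_lt (le_trans e1 (hNle _)) e2
      · rw [hF]
        simp only [hic, his, dif_neg h0, dif_neg h1]
        apply hcomsm
        have h2 : i.val + 1 - a = (i.val - a) + 1 := by omega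
        have h3 : i.val - a < q.length := by have := i.2; omega
        have := q.step ⟨i.val - a, h3⟩
        convert this using 2 <;> simp [Fin.ext_iff, h2]
  have : ((a + b : ℕ) : WithBot ℕ∞) ≤ Order.krullDim (Submodule R M) :=
    LTSeries.length_le_krullDim (⟨a + b, F, hstep⟩ : LTSeries (Submodule R M))
  exact this

lemma mLength_le_add (N : Submodule R M) {a b : ℕ}
    (ha : mLength R N ≤ (a : WithBot ℕ∞)) (hb : mLength R (M ⧸ N) ≤ (b : WithBot ℕ∞)) :
    mLength R M ≤ ((a + b : ℕ) : WithBot ℕ∞) := by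
  have hΦ : StrictMono (fun t : Submodule R M =>
      ((Submodule.comap N.subtype t, Submodule.map N.mkQ t) :
        Submodule R N × Submodule R (M ⧸ N))) := by
    intro s t hst
    rw [lt_iff_le_and_ne]
    constructor
    · exact ⟨Submodule.comap_mono hst.le, Submodule.map_mono hst.le⟩
    · intro heq
      have h1 : Submodule.comap N.subtype s = Submodule.comap N.subtype t :=
        congrArg Prod.fst heq
    
      have h2 : Submodule.map N.mkQ s = Submodule.map N.mkQ t := congrArg Prod.snd heq
      have h1' : N ⊓ s = N ⊓ t := by
        have := congrArg (Submodule.map N.subtype) h1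
        rwa [Submodule.map_comap_subtype, Submodule.map_comap_subtype] at this
      have h2' : N ⊔ s = N ⊔ t := by
        have := congrArg (Submodule.comap N.mkQ) h2
        rwa [Submodule.comap_map_mkQ, Submodule.comap_map_mkQ] at this
      have : t = s := by
        have ht1 : t ≤ s ⊔ N := by
          rw [sup_comm s N, h2']; exact le_sup_right
        calc t = (s ⊔ N) ⊓ t := (inf_eq_right.mpr ht1).symm
        _ = s ⊔ (N ⊓ t) := sup_inf_assoc_of_le _ hst.le
        _ = s ⊔ (N ⊓ s) := by rw [h1']
        _ = s ⊔ (s ⊓ N) := by rw [inf_comm]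
        _ = s := sup_inf_self
      exact hst.ne this.symm
  calc mLength R M ≤ Order.krullDim (Submodule R N × Submodule R (M ⧸ N)) :=
        Order.krullDim_le_of_strictMono _ hΦ
  _ ≤ ((a + b : ℕ) : WithBot ℕ∞) := krullDim_prod_le ha hb

end Add
section Nu
open Order Submodule

universe u
variable {R : Type*} [CommRing R]
variable {M : Type*} [AddCommGroup M] [Module R M]
variable {M₂ : Type*} [AddCommGroup M₂] [Module R M₂]

lemma one_le_mLength_of_nontrivial (M : Type*) [AddCommGroup M] [Module R M] [Nontrivial M] :
    (1 : WithBot ℕ∞) ≤ mLength R M := by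
  have hbt : (⊥ : Submodule R M) < ⊤ := bot_lt_top
  have := LTSeries.length_le_krullDim
    (⟨1, ![⊥, ⊤], fun i => by fin_cases i; simpa using hbt⟩ : LTSeries (Submodule R M))
  exact_mod_cast this

lemma nu_exists_finset [IsNoetherian R M] (N : Submodule R M) :
    ∃ s : Finset M, s.card = nu N ∧ Submodule.span R (s : Set M) = N := by
  have hfg : N.FG := IsNoetherian.noetherian N
  obtain ⟨s, hs⟩ := hfg
  have hne : {n | ∃ s : Finset M, s.card = n ∧ Submodule.span R (s : Set M) = N}.Nonempty :=
    ⟨s.card, s, rfl, hs⟩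
  exact Nat.sInf_mem hne

lemma nu_le_card (N : Submodule R M) (s : Finset M) (hs : Submodule.span R (s : Set M) = N) :
    nu N ≤ s.card :=
  Nat.sInf_le ⟨s, rfl, hs⟩

lemma nu_bot : nu (⊥ : Submodule R M) = 0 :=
  Nat.le_zero.mp (nu_le_card _ ∅ (by simp))

lemma nu_map_le [IsNoetherian R M] [DecidableEq M₂] (f : M →ₗ[R] M₂) (N : Submodule R M) :
    nu (N.map f) ≤ nu N := by
  obtain ⟨s, hcard, hspan⟩ := nu_exists_finset N
  have h : Submodule.span R ((s.image f : Finset M₂) : Set M₂) = N.map f := by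
    rw [Finset.coe_image, ← Submodule.map_span, hspan]
  exact le_trans (nu_le_card _ _ h) (le_trans Finset.card_image_le hcard.le)

lemma nu_le_inf_ker_add_map [IsNoetherian R M] [IsNoetherian R M₂] (f : M →ₗ[R] M₂) (N : Submodule R M) :
    nu N ≤ nu (N ⊓ LinearMap.ker f) + nu (N.map f) := by
  obtain ⟨s₁, hc₁, hs₁⟩ := nu_exists_finset (N ⊓ LinearMap.ker f)
  obtain ⟨s₂, hc₂, hs₂⟩ := nu_exists_finset (N.map f)
  have hchoice : ∀ y ∈ s₂, ∃ z, z ∈ N ∧ f z = y := by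
    intro y hy
    have : y ∈ N.map f := hs₂ ▸ Submodule.subset_span hy
    simpa [Submodule.mem_map] using this
  choose g hg1 hg2 using hchoice
  classical
  set t : Finset M := s₂.attach.image (fun y => g y.1 y.2) with ht
  have hs₁N : Submodule.span R (s₁ : Set M) ≤ N := le_trans (le_of_eq hs₁) inf_le_left
  have htN0 : ∀ z ∈ t, z ∈ N := by
    intro z hz
    rw [ht] at hz
    simp only [Finset.mem_image, Finset.mem_attach, true_and] at hz
    obtain ⟨y, rfl⟩ := hz
    exact hg1 y.1 y.2
  have htN : Submodule.span R (t : Set M) ≤ N :=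
    Submodule.span_le.mpr (fun z hz => htN0 z (by exact_mod_cast hz))
  have hspan : Submodule.span R ((s₁ ∪ t : Finset M) : Set M) = N := by
    apply le_antisymm
    · rw [Finset.coe_union, Submodule.span_union]
      exact sup_le hs₁N htN
    · intro z hz
      have hfz : f z ∈ Submodule.span R (s₂ : Set M₂) := by
        rw [hs₂]; exact ⟨z, hz, rfl⟩
      have himg : (s₂ : Set M₂) ⊆ f '' (t : Set M) := by
        intro y hy
        refine ⟨g y hy, ?_, hg2 y hy⟩
        simp only [ht, Finset.coe_image, Set.mem_image, Finset.mem_coe]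
        exact ⟨⟨y, hy⟩, Finset.mem_attach _ _, rfl⟩
      have hmem : f z ∈ Submodule.span R (f '' (t : Set M)) := Submodule.span_mono himg hfz
      rw [← Submodule.map_span] at hmem
      obtain ⟨w, hw, hwz⟩ := hmem
      have hzw : z - w ∈ N ⊓ LinearMap.ker f := by
        refine ⟨N.sub_mem hz (htN hw), ?_⟩
        simp [LinearMap.mem_ker, map_sub, hwz]
      have h1 : z - w ∈ Submodule.span R ((s₁ ∪ t : Finset M) : Set M) := by
        rw [Finset.coe_union, Submodule.span_union]
        exact le_sup_left (a := Submodule.span R (s₁ : Set M)) (hs₁ ▸ hzw)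
      have h2 : w ∈ Submodule.span R ((s₁ ∪ t : Finset M) : Set M) := by
        rw [Finset.coe_union, Submodule.span_union]
        exact le_sup_right (a := Submodule.span R (s₁ : Set M)) hw
      simpa using Submodule.add_mem _ h1 h2
  calc nu N ≤ (s₁ ∪ t).card := nu_le_card _ _ hspan
  _ ≤ s₁.card + t.card := Finset.card_union_le _ _
  _ ≤ nu (N ⊓ LinearMap.ker f) + nu (N.map f) := by
      have : t.card ≤ s₂.card := le_trans Finset.card_image_le (by simp)
      omega

lemma nu_le_nu_map_mkQ [IsNoetherian R M] [IsLocalRing R] (N K : Submodule R M)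
    (hK1 : K ≤ (IsLocalRing.maximalIdeal R) • N) :
    nu N ≤ nu (N.map K.mkQ) := by
  classical
  obtain ⟨s, hc, hs⟩ := nu_exists_finset (N.map K.mkQ)
  have hchoice : ∀ y ∈ s, ∃ z, z ∈ N ∧ K.mkQ z = y := by
    intro y hy
    have : y ∈ N.map K.mkQ := hs ▸ Submodule.subset_span hy
    simpa [Submodule.mem_map] using this
  choose g hg1 hg2 using hchoice
  set t : Finset M := s.attach.image (fun y => g y.1 y.2) with ht
  have htN0 : ∀ z ∈ t, z ∈ N := by
    intro z hz
    rw [ht] at hz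
    simp only [Finset.mem_image, Finset.mem_attach, true_and] at hz
    obtain ⟨y, rfl⟩ := hz
    exact hg1 y.1 y.2
  have htN : Submodule.span R (t : Set M) ≤ N :=
    Submodule.span_le.mpr (fun z hz => htN0 z (by exact_mod_cast hz))
  have hNle : N ≤ Submodule.span R (t : Set M) ⊔ K := by
    intro z hz
    have hfz : K.mkQ z ∈ Submodule.span R (s : Set (M ⧸ K)) := by
      rw [hs]; exact ⟨z, hz, rfl⟩
    have himg : (s : Set (M ⧸ K)) ⊆ K.mkQ '' (t : Set M) := by
      intro y hy
      refine ⟨g y hy, ?_, hg2 y hy⟩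
      simp only [ht, Finset.coe_image, Set.mem_image, Finset.mem_coe]
      exact ⟨⟨y, hy⟩, Finset.mem_attach _ _, rfl⟩
    have hmem : K.mkQ z ∈ Submodule.span R (K.mkQ '' (t : Set M)) :=
      Submodule.span_mono himg hfz
    rw [← Submodule.map_span] at hmem
    obtain ⟨w, hw, hwz⟩ := hmem
    have : z - w ∈ K := by
      rw [← Submodule.ker_mkQ K, LinearMap.mem_ker, map_sub, hwz, sub_self]
    have h2 : z = w + (z - w) := by abel
    rw [h2]
    exact Submodule.add_mem _ (Submodule.mem_sup_left hw) (Submodule.mem_sup_right this)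
  have hNak : N ≤ Submodule.span R (t : Set M) := by
    refine Submodule.le_of_le_smul_of_le_jacobson_bot (IsNoetherian.noetherian N) ?_
      (le_trans hNle (sup_le le_sup_left (le_trans hK1 le_sup_right)))
    rw [IsLocalRing.jacobson_eq_maximalIdeal (⊥ : Ideal R) bot_ne_top]
  have hspan : Submodule.span R (t : Set M) = N := le_antisymm htN hNak
  calc nu N ≤ t.card := nu_le_card _ _ hspan
  _ ≤ s.card := le_trans Finset.card_image_le (by simp)
  _ = nu (N.map K.mkQ) := hc

lemma nu_le_of_mLength_le (c : ℕ) :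
    ∀ {M : Type u} [AddCommGroup M] [Module R M] [IsNoetherian R M] (N : Submodule R M),
      mLength R N ≤ (c : WithBot ℕ∞) → nu N ≤ c := by
  induction c with
  | zero =>
    intro M _ _ _ N h
    by_cases hN : N = ⊥
    · simp [hN, nu_bot]
    · obtain ⟨z, hzN, hz0⟩ := Submodule.exists_mem_ne_zero_of_ne_bot hN
      have : Nontrivial N := ⟨⟨⟨z, hzN⟩, 0, by simp [hz0]⟩⟩
      have h1 := one_le_mLength_of_nontrivial (R := R) N
      have := le_trans h1 h
      norm_num at this
  | succ c ih =>
    intro M _ _ _ N h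
    by_cases hN : N = ⊥
    · simp [hN, nu_bot]
    · obtain ⟨z, hzN, hz0⟩ := Submodule.exists_mem_ne_zero_of_ne_bot hN
      set K : Submodule R M := Submodule.span R {z} with hK
      have hKN : K ≤ N := by
        rw [hK, Submodule.span_le]; simpa using hzN
      have hmain := nu_le_inf_ker_add_map K.mkQ N
      rw [Submodule.ker_mkQ, inf_eq_right.mpr hKN] at hmain
      have hKnu : nu K ≤ 1 := by
        have := nu_le_card K ({z} : Finset M) (by simp [hK])
        simpa using this
      -- length of the quotient piece
      have hquot : mLength R (N.map K.mkQ) ≤ (c : WithBot ℕ∞) := by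
        rw [mLength_map_eq, Submodule.ker_mkQ]
        by_contra hcon
        push_neg at hcon
        have h1 : ((c + 1 : ℕ) : WithBot ℕ∞) ≤
            mLength R (N ⧸ Submodule.comap N.subtype K) := wb_add_one_le hcon
        have h2 : (1 : WithBot ℕ∞) ≤ mLength R (Submodule.comap N.subtype K) := by
          have : Nontrivial (Submodule.comap N.subtype K) := by
            refine ⟨⟨⟨⟨z, hzN⟩, ?_⟩, 0, ?_⟩⟩
            · simp only [Submodule.mem_comap, Submodule.coe_subtype]
              exact Submodule.subset_span rfl
            · intro hcon2
              apply hz0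
              simpa [Subtype.ext_iff] using hcon2
          exact one_le_mLength_of_nontrivial _
        have h3 := le_mLength_add (M := N) (Submodule.comap N.subtype K)
          (a := 1) (b := c + 1) h2 h1
        have h4 := le_trans h3 h
        have : 1 + (c + 1) ≤ c + 1 := by exact_mod_cast h4
        omega
      have hihq := ih (N.map K.mkQ) hquot
      omega
end Nu
section SpanLength
open Order Submodule

variable {R : Type*} [CommRing R]
variable {M : Type*} [AddCommGroup M] [Module R M]

lemma mLength_cyclic_le (J : Ideal R) (g : M) (hgen : Submodule.span R {g} = ⊤)
    (hJg : ∀ a ∈ J, a • g = 0) : mLength R M ≤ mLength R (R ⧸ J) := by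
  have hker : (J : Submodule R R) ≤ LinearMap.ker (LinearMap.toSpanSingleton R M g) := by
    intro a ha
    simp only [LinearMap.mem_ker, LinearMap.toSpanSingleton_apply]
    exact hJg a ha
  have hsurj : Function.Surjective
      (Submodule.liftQ (J : Submodule R R) (LinearMap.toSpanSingleton R M g) hker) := by
    rw [← LinearMap.range_eq_top, Submodule.range_liftQ, ← LinearMap.span_singleton_eq_range,
      hgen]
  exact mLength_le_of_surjective _ hsurj

lemma mLength_span_le (J : Ideal R) {lam : ℕ}
    (hlam : mLength R (R ⧸ J) ≤ (lam : WithBot ℕ∞)) (s : Finset M)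
    (hJs : ∀ a ∈ J, ∀ m ∈ Submodule.span R (s : Set M), a • m = (0 : M)) :
    mLength R (Submodule.span R (s : Set M)) ≤ ((s.card * lam : ℕ) : WithBot ℕ∞) := by
  classical
  induction s using Finset.induction with
  | empty =>
    have : Subsingleton (Submodule.span R ((∅ : Finset M) : Set M)) := by
      rw [Finset.coe_empty, Submodule.span_empty]
      infer_instance
    simpa using le_trans mLength_subsingleton (by norm_num : (0:WithBot ℕ∞) ≤ ((0:ℕ):WithBot ℕ∞))
  | @insert a s ha ih =>
    set T := Submodule.span R ((insert a s : Finset M) : Set M) with hT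
    have hsub : Submodule.span R (s : Set M) ≤ T := by
      apply Submodule.span_mono; intro z hz; simp only [Finset.coe_insert, Set.mem_insert_iff]
      right; exact hz
    have haT : a ∈ T := Submodule.subset_span (by simp)
    set K : Submodule R T := Submodule.comap T.subtype (Submodule.span R (s : Set M)) with hKdef
    -- the submodule piece
    have hKlen : mLength R K ≤ ((s.card * lam : ℕ) : WithBot ℕ∞) := by
      have e : K ≃ₗ[R] Submodule.span R (s : Set M) :=
        Submodule.comapSubtypeEquivOfLe hsub
      rw [mLength_eq_of_equiv e]
      exact ih (fun b hb m hm => hJs b hb m (hsub hm))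
    -- the quotient piece is cyclic, killed by J
    have hQlen : mLength R (T ⧸ K) ≤ mLength R (R ⧸ J) := by
      refine mLength_cyclic_le J (Submodule.Quotient.mk ⟨a, haT⟩) ?_ ?_
      · -- generated by the class of a
        rw [eq_top_iff]
        rintro q -
        obtain ⟨t, rfl⟩ := Submodule.Quotient.mk_surjective K q
        have ht : (t : M) ∈ Submodule.span R {a} ⊔ Submodule.span R (s : Set M) := by
          have h2 : (t : M) ∈ Submodule.span R ((insert a s : Finset M) : Set M) := t.2
          rwa [Finset.coe_insert, Submodule.span_insert] at h2
        obtain ⟨u, hu, w, hw, huw⟩ := Submodule.mem_sup.mp ht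
        obtain ⟨r, hr⟩ := Submodule.mem_span_singleton.mp hu
        refine Submodule.mem_span_singleton.mpr ⟨r, ?_⟩
        have hmem : r • (⟨a, haT⟩ : T) - t ∈ K := by
          refine Submodule.mem_comap.mpr ?_
          have heq : T.subtype (r • (⟨a, haT⟩ : T) - t) = r • a - (t : M) := by simp
          rw [heq]
          have heq2 : r • a - (t : M) = -w := by rw [hr, ← huw]; abel
          rw [heq2]
          exact Submodule.neg_mem _ hw
        rw [← Submodule.Quotient.mk_smul]
        exact (Submodule.Quotient.eq K).mpr hmem
      · intro b hb
        have hba : b • a = 0 := hJs b hb a haT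
        have : b • (⟨a, haT⟩ : T) = 0 := by
          ext; simpa using hba
        rw [← Submodule.Quotient.mk_smul, this, Submodule.Quotient.mk_zero]
    have hQlen' : mLength R (T ⧸ K) ≤ (lam : WithBot ℕ∞) := le_trans hQlen hlam
    have := mLength_le_add K hKlen hQlen'
    have hcard : (insert a s).card * lam = s.card * lam + lam := by
      rw [Finset.card_insert_of_notMem ha]; ring
    rw [hcard]
    exact this

end SpanLength
section Chi
open Order Submodule LinearMap

variable {R : Type*} [CommRing R]
variable {M : Type*} [AddCommGroup M] [Module R M]

lemma mLength_quot_mono' {A : Type*} [AddCommGroup A] [Module R A] {P Q : Submodule R A}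
    (h : P ≤ Q) : mLength R (A ⧸ Q) ≤ mLength R (A ⧸ P) := by
  have hsurj : Function.Surjective (Submodule.mapQ P Q LinearMap.id (fun y hy => h hy)) := by
    intro y
    obtain ⟨z, rfl⟩ := Submodule.Quotient.mk_surjective Q y
    exact ⟨Submodule.Quotient.mk z, by simp [Submodule.mapQ_apply]⟩
  exact mLength_le_of_surjective _ hsurj

lemma herbrand_ker_le [IsNoetherian R M] (x : R) (C : Submodule R M) {b : ℕ}
    (hb : mLength R
        (C.map (Submodule.mkQ (C.map (LinearMap.lsmul R M x)))) ≤ (b : WithBot ℕ∞)) :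
    mLength R (C ⊓ LinearMap.ker (LinearMap.lsmul R M x) : Submodule R M)
      ≤ (b : WithBot ℕ∞) := by
  have hmono : Monotone (fun i : ℕ => C ⊓ LinearMap.ker (LinearMap.lsmul R M (x ^ i))) := by
    intro i j hij
    refine inf_le_inf_left _ ?_
    intro m hm
    simp only [SetLike.mem_coe, LinearMap.mem_ker, LinearMap.lsmul_apply] at hm ⊢
    obtain ⟨c, rfl⟩ := Nat.exists_eq_add_of_le hij
    rw [pow_add, mul_comm, mul_smul, hm, smul_zero]
  obtain ⟨n₀, hn₀⟩ := (monotone_stabilizes_iff_noetherian.mpr inferInstance)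
    ⟨fun i => C ⊓ LinearMap.ker (LinearMap.lsmul R M (x ^ i)), hmono⟩
  set k := n₀ + 1 with hk
  set N : Submodule R M := C ⊓ LinearMap.ker (LinearMap.lsmul R M (x ^ k)) with hNdef
  have hstab : C ⊓ LinearMap.ker (LinearMap.lsmul R M (x ^ (k + 1))) = N :=
    ((hn₀ (k + 1) (by omega)).symm.trans (hn₀ k (by omega)) :)
  have hNC : N ≤ C := inf_le_left
  have hCkN : C ⊓ LinearMap.ker (LinearMap.lsmul R M x) ≤ N := by
    rintro m ⟨hm1, hm2⟩
    refine ⟨hm1, ?_⟩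
    simp only [SetLike.mem_coe, LinearMap.mem_ker, LinearMap.lsmul_apply] at hm2 ⊢
    rw [pow_succ, mul_smul, hm2, smul_zero]
  have hkey : ∀ m ∈ C, (LinearMap.lsmul R M x) m ∈ N → m ∈ N := by
    intro m hm hfm
    have h2 : x ^ (k + 1) • m = 0 := by
      have h3 := hfm.2
      simp only [SetLike.mem_coe, LinearMap.mem_ker, LinearMap.lsmul_apply] at h3
      rw [pow_succ, mul_smul]
      exact h3
    have : m ∈ C ⊓ LinearMap.ker (LinearMap.lsmul R M (x ^ (k + 1))) :=
      ⟨hm, by simpa [LinearMap.mem_ker, LinearMap.lsmul_apply] using h2⟩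
    rwa [hstab] at this
  set xC : Submodule R M := C.map (LinearMap.lsmul R M x) with hxC
  set xN : Submodule R M := N.map (LinearMap.lsmul R M x) with hxN
  have hxNN : xN ≤ N := by
    rintro _ ⟨m, hm, rfl⟩
    refine ⟨C.smul_mem x (hNC hm), ?_⟩
    have hm2 := hm.2
    simp only [SetLike.mem_coe, LinearMap.mem_ker, LinearMap.lsmul_apply] at hm2 ⊢
    rw [smul_comm, hm2, smul_zero]
  have hNxC : N ⊓ xC = xN := by
    apply le_antisymm
    · rintro m ⟨hmN, hmxC⟩
      obtain ⟨c, hc, rfl⟩ := hmxC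
      exact ⟨c, hkey c hc hmN, rfl⟩
    · exact le_inf hxNN (Submodule.map_mono hNC)
  -- λ(N ⧸ xN) ≤ b
  have hb2 : mLength R (N ⧸ Submodule.comap N.subtype xN) ≤ (b : WithBot ℕ∞) := by
    have e1 : mLength R (N.map (Submodule.mkQ xC)) =
        mLength R (N ⧸ Submodule.comap N.subtype xN) := by
      rw [mLength_map_eq, Submodule.ker_mkQ, comap_subtype_inf' N xC, inf_comm xC N, hNxC]
    rw [← e1]
    exact le_trans (mLength_mono (Submodule.map_mono hNC)) hb
  -- filtration
  set Ni : ℕ → Submodule R M := fun i => N.map (LinearMap.lsmul R M (x ^ i)) with hNi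
  have hNile : ∀ i : ℕ, Ni (i + 1) ≤ Ni i := by
    rintro i _ ⟨m, hm, rfl⟩
    refine ⟨x • m, hxNN ⟨m, hm, rfl⟩, ?_⟩
    simp only [LinearMap.lsmul_apply]
    rw [← mul_smul, ← pow_succ]
  have hslice : ∀ i : ℕ,
      mLength R (↥(Ni i) ⧸ Submodule.comap (Ni i).subtype (Ni (i + 1))) ≤ (b : WithBot ℕ∞) := by
    intro i
    have e3 : mLength R ((Ni i).map (Submodule.mkQ (Ni (i + 1)))) =
        mLength R (↥(Ni i) ⧸ Submodule.comap (Ni i).subtype (Ni (i + 1))) := by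
      rw [mLength_map_eq, Submodule.ker_mkQ, comap_subtype_inf' (Ni i) (Ni (i+1)),
        inf_eq_left.mpr (hNile i)]
    rw [← e3]
    have e4 : (Ni i).map (Submodule.mkQ (Ni (i + 1))) =
        N.map ((Submodule.mkQ (Ni (i + 1))).comp (LinearMap.lsmul R M (x ^ i))) := by
      rw [← Submodule.map_comp]
    rw [e4, mLength_map_eq]
    have hxNker : Submodule.comap N.subtype xN ≤ Submodule.comap N.subtype
        (LinearMap.ker ((Submodule.mkQ (Ni (i + 1))).comp (LinearMap.lsmul R M (x ^ i)))) := by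
      apply Submodule.comap_mono
      rintro _ ⟨m, hm, rfl⟩
      simp only [SetLike.mem_coe, LinearMap.mem_ker, LinearMap.comp_apply, LinearMap.lsmul_apply,
        Submodule.mkQ_apply, Submodule.Quotient.mk_eq_zero]
      refine ⟨m, hm, ?_⟩
      simp only [LinearMap.lsmul_apply]
      rw [← mul_smul, ← pow_succ]
    exact le_trans (mLength_quot_mono' hxNker) hb2
  have hNk : Ni k = ⊥ := by
    rw [eq_bot_iff]
    rintro _ ⟨m, hm, rfl⟩
    have := hm.2
    simp only [SetLike.mem_coe, LinearMap.mem_ker, LinearMap.lsmul_apply] at this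
    simp [this]
  have hfilt : ∀ j : ℕ, j ≤ k → mLength R (Ni (k - j)) ≤ ((j * b : ℕ) : WithBot ℕ∞) := by
    intro j
    induction j with
    | zero =>
      intro _
      rw [Nat.sub_zero, hNk]
      have : Subsingleton (↥(⊥ : Submodule R M)) := inferInstance
      simpa using mLength_subsingleton
    | succ j ih =>
      intro hj
      have hkj : k - (j + 1) + 1 = k - j := by omega
      have h1 : mLength R (Submodule.comap (Ni (k - (j+1))).subtype (Ni (k - j)))
          ≤ ((j * b : ℕ) : WithBot ℕ∞) := by
        have hle2 : Ni (k - j) ≤ Ni (k - (j+1)) := by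
          rw [← hkj]; exact hNile _
        rw [comap_subtype_inf' _ _, inf_eq_left.mpr hle2,
          mLength_eq_of_equiv (Submodule.comapSubtypeEquivOfLe hle2)]
        exact ih (by omega)
      have h2 : mLength R (↥(Ni (k - (j+1))) ⧸
          Submodule.comap (Ni (k - (j+1))).subtype (Ni (k - j))) ≤ (b : WithBot ℕ∞) := by
        rw [← hkj]; exact hslice _
      have h3 := mLength_le_add _ h1 h2
      have : (j * b + b : ℕ) = (j + 1) * b := by ring
      rwa [this] at h3
  have hN0 : Ni 0 = N := by
    rw [hNi]
    ext m
    simp [LinearMap.lsmul_apply]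
  have hNlen : mLength R N ≤ ((k * b : ℕ) : WithBot ℕ∞) := by
    have := hfilt k le_rfl
    rwa [Nat.sub_self, hN0] at this
  obtain ⟨xn, _, hxn⟩ := exists_nat_of_mLength_le (le_trans (mLength_mono hxNN) hNlen)
  -- first isomorphism : λ(↥N ⧸ comap subtype ker f) = λ(xN)
  have hiso : mLength R (N ⧸ Submodule.comap N.subtype (LinearMap.ker (LinearMap.lsmul R M x))) = mLength R xN :=
    (mLength_map_eq (LinearMap.lsmul R M x) N).symm
  have hWeq : mLength R (Submodule.comap N.subtype (LinearMap.ker (LinearMap.lsmul R M x))) =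
      mLength R (C ⊓ LinearMap.ker (LinearMap.lsmul R M x) : Submodule R M) := by
    rw [comap_subtype_inf' N (LinearMap.ker (LinearMap.lsmul R M x)),
      mLength_eq_of_equiv (Submodule.comapSubtypeEquivOfLe inf_le_right)]
    have heq : (LinearMap.ker (LinearMap.lsmul R M x) ⊓ N : Submodule R M) =
        C ⊓ LinearMap.ker (LinearMap.lsmul R M x) := by
      apply le_antisymm
      · rw [inf_comm]
        exact inf_le_inf_right _ hNC
      · exact le_inf inf_le_right hCkN
    rw [heq]
  obtain ⟨zc, _, hzc⟩ := exists_nat_of_mLength_le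
    (le_trans (mLength_submodule_le (Submodule.comap N.subtype (LinearMap.ker (LinearMap.lsmul R M x)))) hNlen)
  have hge := le_mLength_add (M := ↥N) (Submodule.comap N.subtype (LinearMap.ker (LinearMap.lsmul R M x)))
    (a := zc) (b := xn) (le_of_eq hzc.symm) (by rw [hiso]; exact le_of_eq hxn.symm)
  have hW2 : mLength R (Submodule.comap N.subtype xN) ≤ (xn : WithBot ℕ∞) := by
    rw [comap_subtype_inf' N xN, inf_eq_left.mpr hxNN,
      mLength_eq_of_equiv (Submodule.comapSubtypeEquivOfLe hxNN)]
    exact le_of_eq hxn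
  have hle := mLength_le_add (M := ↥N) (Submodule.comap N.subtype xN) hW2 hb2
  have hfin : zc + xn ≤ xn + b := by exact_mod_cast le_trans hge hle
  have hzb : zc ≤ b := by omega
  calc mLength R (C ⊓ LinearMap.ker (LinearMap.lsmul R M x) : Submodule R M)
      = (zc : WithBot ℕ∞) := by rw [← hWeq, hzc]
  _ ≤ (b : WithBot ℕ∞) := by exact_mod_cast hzb

end Chi
section KeyLemma
open Order Submodule LinearMap

variable {R : Type*} [CommRing R]
variable {M : Type*} [AddCommGroup M] [Module R M]

lemma map_mkQ_self (P : Submodule R M) : P.map P.mkQ = ⊥ := by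
  rw [eq_bot_iff]
  rintro _ ⟨m, hm, rfl⟩
  simp only [Submodule.mem_bot, Submodule.mkQ_apply, Submodule.Quotient.mk_eq_zero]
  exact hm

lemma key_nu_le [IsLocalRing R] [IsNoetherian R M] (L0 : Ideal R) (x : R)
    (hx : x ∈ IsLocalRing.maximalIdeal R) (J : Ideal R) (hJdef : J = L0 ⊔ Ideal.span {x})
    {lam : ℕ} (hlam : mLength R (R ⧸ J) ≤ (lam : WithBot ℕ∞))
    (E U : Submodule R M) (hUE : U ≤ E)
    (hL0E : ∀ a ∈ L0, ∀ m ∈ E, a • m = (0 : M)) :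
    nu U ≤ nu E * lam := by
  classical
  set fx : M →ₗ[R] M := LinearMap.lsmul R M x with hfx
  have hfxapp : ∀ m : M, fx m = x • m := fun m => rfl
  set xE : Submodule R M := E.map fx with hxE
  set xU : Submodule R M := U.map fx with hxU
  have hxEE : xE ≤ E := by rintro _ ⟨m, hm, rfl⟩; exact E.smul_mem x hm
  have hxUU : xU ≤ U := by rintro _ ⟨m, hm, rfl⟩; exact U.smul_mem x hm
  have hxUxE : xU ≤ xE := Submodule.map_mono hUE
  set t := nu E with ht
  obtain ⟨sE, hsEcard, hsEspan⟩ := nu_exists_finset E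
  -- any image of E in a quotient killing xE has length ≤ t * lam
  have hTbound : ∀ P : Submodule R M, xE ≤ P →
      mLength R (E.map (Submodule.mkQ P)) ≤ ((t * lam : ℕ) : WithBot ℕ∞) := by
    intro P hP
    have hspan : Submodule.span R ((sE.image (Submodule.mkQ P) : Finset (M ⧸ P)) : Set (M ⧸ P))
        = E.map (Submodule.mkQ P) := by
      rw [Finset.coe_image, ← Submodule.map_span, hsEspan]
    have hkill : ∀ a ∈ J, ∀ m ∈ Submodule.span R
        ((sE.image (Submodule.mkQ P) : Finset (M ⧸ P)) : Set (M ⧸ P)), a • m = 0 := by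
      intro a ha m hm
      rw [hspan] at hm
      obtain ⟨e, he, rfl⟩ := hm
      rw [hJdef] at ha
      obtain ⟨l, hl, y, hy, rfl⟩ := Submodule.mem_sup.mp ha
      obtain ⟨r, hr⟩ := Submodule.mem_span_singleton.mp hy
      have h1 : (l + y) • e = r • (x • e) := by
        rw [add_smul, hL0E l hl e he, zero_add, ← hr, smul_eq_mul, mul_smul]
      have h2 : (l + y) • e ∈ P := by
        rw [h1]
        exact hP (Submodule.smul_mem _ r (⟨e, he, rfl⟩ : x • e ∈ xE))
      simp only [Submodule.mkQ_apply]
      rw [← Submodule.Quotient.mk_smul, Submodule.Quotient.mk_eq_zero]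
      exact h2
    rw [← hspan]
    refine le_trans (mLength_span_le J hlam _ hkill) ?_
    have : (sE.image (Submodule.mkQ P)).card * lam ≤ t * lam :=
      Nat.mul_le_mul_right _ (le_trans Finset.card_image_le hsEcard.le)
    exact_mod_cast this
  -- pieces
  set T : Submodule R (M ⧸ xE) := E.map (Submodule.mkQ xE) with hT
  set T1 : Submodule R (M ⧸ xE) := U.map (Submodule.mkQ xE) with hT1
  set T2 : Submodule R (M ⧸ (U ⊔ xE)) := E.map (Submodule.mkQ (U ⊔ xE)) with hT2
  have hTlen : mLength R T ≤ ((t * lam : ℕ) : WithBot ℕ∞) := hTbound xE le_rfl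
  have hT2len : mLength R T2 ≤ ((t * lam : ℕ) : WithBot ℕ∞) := hTbound (U ⊔ xE) le_sup_right
  have hT1T : T1 ≤ T := Submodule.map_mono hUE
  obtain ⟨a1, ha1le, ha1⟩ := exists_nat_of_mLength_le (le_trans (mLength_mono hT1T) hTlen)
  obtain ⟨b2, hb2le, hb2⟩ := exists_nat_of_mLength_le hT2len
  -- the composite map ρ : M⧸xE → M⧸(U⊔xE)
  have hxEker : xE ≤ LinearMap.ker (Submodule.mkQ (U ⊔ xE)) := by
    rw [Submodule.ker_mkQ]; exact le_sup_right
  set ρ : (M ⧸ xE) →ₗ[R] (M ⧸ (U ⊔ xE)) := Submodule.liftQ xE (Submodule.mkQ (U ⊔ xE)) hxEker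
    with hρ
  have hkerρ : LinearMap.ker ρ = T1 := by
    rw [hρ, Submodule.ker_liftQ, Submodule.ker_mkQ, Submodule.map_sup, map_mkQ_self, sup_bot_eq]
  have hmapρ : T.map ρ = T2 := by
    rw [hT, ← Submodule.map_comp, hρ, Submodule.liftQ_mkQ]
  -- key identity: λ(T ⧸ T1) = λ(T2)
  have hquotT1 : mLength R (↥T ⧸ Submodule.comap T.subtype T1) = (b2 : WithBot ℕ∞) := by
    have := mLength_map_eq ρ T
    rw [hmapρ, hkerρ] at this
    rw [← this, hb2]
  -- Add≥ : a1 + b2 ≤ t * lam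
  have hsub1 : mLength R (Submodule.comap T.subtype T1) = (a1 : WithBot ℕ∞) := by
    rw [comap_subtype_inf' T T1, inf_eq_left.mpr hT1T,
      mLength_eq_of_equiv (Submodule.comapSubtypeEquivOfLe hT1T), ha1]
  have hge := le_mLength_add (M := ↥T) (Submodule.comap T.subtype T1)
    (a := a1) (b := b2) (le_of_eq hsub1.symm) (le_of_eq hquotT1.symm)
  have hab : a1 + b2 ≤ t * lam := by exact_mod_cast le_trans hge hTlen
  -- Nakayama : nu U ≤ nu (U.map π), π := mkQ xU
  have hxUm : xU ≤ (IsLocalRing.maximalIdeal R) • U := by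
    rintro _ ⟨m, hm, rfl⟩
    exact Submodule.smul_mem_smul hx hm
  have hnak := nu_le_nu_map_mkQ U xU hxUm
  set π : M →ₗ[R] (M ⧸ xU) := Submodule.mkQ xU with hπ
  set A : Submodule R (M ⧸ xU) := U.map π with hA
  -- split A along W' := (xE ⊓ U).map π
  set W : Submodule R M := xE ⊓ U with hW
  set W' : Submodule R (M ⧸ xU) := W.map π with hW'
  have hWU : W ≤ U := inf_le_right
  have hxUW : xU ≤ W := le_inf hxUxE hxUU
  have hW'A : W' ≤ A := Submodule.map_mono hWU
  have hsplit := nu_le_inf_ker_add_map (Submodule.mkQ W') A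
  rw [Submodule.ker_mkQ, inf_eq_right.mpr hW'A] at hsplit
  -- bound the quotient piece : nu (A.map (mkQ W')) ≤ a1
  have hqpiece : nu (A.map (Submodule.mkQ W')) ≤ a1 := by
    set g : M →ₗ[R] ((M ⧸ xU) ⧸ W') := (Submodule.mkQ W').comp π with hg
    have hmapg : A.map (Submodule.mkQ W') = U.map g := by
      rw [hA, ← Submodule.map_comp]
    have hkerg : LinearMap.ker g ⊓ U = W := by
      apply le_antisymm
      · rintro u ⟨hu1, hu2⟩
        simp only [SetLike.mem_coe, LinearMap.mem_ker, hg, LinearMap.comp_apply,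
          Submodule.mkQ_apply, Submodule.Quotient.mk_eq_zero] at hu1
        obtain ⟨w, hw, hww⟩ := hu1
        have : u - w ∈ xU := by
          rw [← Submodule.ker_mkQ xU, LinearMap.mem_ker, map_sub]
          rw [Submodule.mkQ_apply, Submodule.mkQ_apply] at hww ⊢
          rw [← hww, sub_self]
        have h2 : u = w + (u - w) := by abel
        rw [h2]
        exact W.add_mem hw (hxUW this)
      · refine le_inf ?_ hWU
        intro w hw
        simp only [SetLike.mem_coe, LinearMap.mem_ker, hg, LinearMap.comp_apply,
          Submodule.mkQ_apply, Submodule.Quotient.mk_eq_zero]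
        exact ⟨w, hw, rfl⟩
    have hkerh : LinearMap.ker (Submodule.mkQ xE) ⊓ U = W := by
      rw [Submodule.ker_mkQ, hW]
    have hlen : mLength R (U.map g) = mLength R T1 := by
      rw [mLength_map_eq g U, mLength_map_eq (Submodule.mkQ xE) U,
        comap_subtype_inf' U (LinearMap.ker g), comap_subtype_inf' U (LinearMap.ker _),
        hkerg, hkerh]
    refine nu_le_of_mLength_le a1 _ ?_
    rw [hmapg, hlen, ha1]
  -- bound nu W' ≤ b2 via the Herbrand lemma in M ⧸ U
  have hwpiece : nu W' ≤ b2 := by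
    set V : Submodule R M := E ⊓ Submodule.comap fx U with hV
    have hUkerπfx : U ≤ LinearMap.ker (π.comp fx) := by
      intro u hu
      simp only [LinearMap.mem_ker, LinearMap.comp_apply, hπ, Submodule.mkQ_apply,
        Submodule.Quotient.mk_eq_zero]
      exact ⟨u, hu, rfl⟩
    set gbar : (M ⧸ U) →ₗ[R] (M ⧸ xU) := Submodule.liftQ U (π.comp fx) hUkerπfx with hgbar
    have hVfx : V.map fx = W := by
      apply le_antisymm
      · rintro _ ⟨v, ⟨hv1, hv2⟩, rfl⟩
        exact ⟨⟨v, hv1, rfl⟩, hv2⟩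
      · rintro w ⟨⟨e, he, rfl⟩, hw2⟩
        exact ⟨e, ⟨he, hw2⟩, rfl⟩
    have hW'alt : W' = (V.map (Submodule.mkQ U)).map gbar := by
      rw [← Submodule.map_comp, hgbar, Submodule.liftQ_mkQ, Submodule.map_comp, hVfx]
    set Ebar : Submodule R (M ⧸ U) := E.map (Submodule.mkQ U) with hEbar
    set xEbar : Submodule R (M ⧸ U) := Ebar.map (LinearMap.lsmul R (M ⧸ U) x) with hxEbar
    have hxEbar2 : xEbar = xE.map (Submodule.mkQ U) := by
      apply le_antisymm
      · rintro _ ⟨_, ⟨e, he, rfl⟩, rfl⟩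
        refine ⟨x • e, ⟨e, he, rfl⟩, ?_⟩
        simp [hfxapp, LinearMap.lsmul_apply, Submodule.mkQ_apply, Submodule.Quotient.mk_smul]
      · rintro _ ⟨_, ⟨e, he, rfl⟩, rfl⟩
        refine ⟨Submodule.Quotient.mk e, ⟨e, he, rfl⟩, ?_⟩
        simp [hfxapp, LinearMap.lsmul_apply, Submodule.mkQ_apply, Submodule.Quotient.mk_smul]
    -- λ(Ebar ⧸ x·Ebar) = λ(T2)
    have hUker2 : U ≤ LinearMap.ker (Submodule.mkQ (U ⊔ xE)) := by
      rw [Submodule.ker_mkQ]; exact le_sup_left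
    set ρ2 : (M ⧸ U) →ₗ[R] (M ⧸ (U ⊔ xE)) := Submodule.liftQ U (Submodule.mkQ (U ⊔ xE)) hUker2
      with hρ2
    have hkerρ2 : LinearMap.ker ρ2 = xEbar := by
      rw [hρ2, Submodule.ker_liftQ, Submodule.ker_mkQ, Submodule.map_sup, map_mkQ_self,
        bot_sup_eq, hxEbar2]
    have hmapρ2 : Ebar.map ρ2 = T2 := by
      rw [hEbar, ← Submodule.map_comp, hρ2, Submodule.liftQ_mkQ]
    have hchihyp : mLength R (Ebar.map (Submodule.mkQ xEbar)) ≤ (b2 : WithBot ℕ∞) := by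
      have h1 := mLength_map_eq ρ2 Ebar
      rw [hmapρ2, hkerρ2] at h1
      have h2 := mLength_map_eq (Submodule.mkQ xEbar) Ebar
      rw [Submodule.ker_mkQ] at h2
      rw [h2, ← h1, hb2]
    have hchi := herbrand_ker_le x Ebar hchihyp
    have hVmap : V.map (Submodule.mkQ U) =
        Ebar ⊓ LinearMap.ker (LinearMap.lsmul R (M ⧸ U) x) := by
      apply le_antisymm
      · rintro _ ⟨v, ⟨hv1, hv2⟩, rfl⟩
        refine ⟨⟨v, hv1, rfl⟩, ?_⟩
        simp only [SetLike.mem_coe, LinearMap.mem_ker, LinearMap.lsmul_apply,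
          Submodule.mkQ_apply]
        rw [← Submodule.Quotient.mk_smul, Submodule.Quotient.mk_eq_zero]
        exact hv2
      · rintro _ ⟨⟨e, he, rfl⟩, hq2⟩
        simp only [SetLike.mem_coe, LinearMap.mem_ker, LinearMap.lsmul_apply,
          Submodule.mkQ_apply] at hq2
        rw [← Submodule.Quotient.mk_smul, Submodule.Quotient.mk_eq_zero] at hq2
        exact ⟨e, ⟨he, hq2⟩, rfl⟩
    have hnuV : nu (V.map (Submodule.mkQ U)) ≤ b2 := by
      refine nu_le_of_mLength_le b2 _ ?_
      rw [hVmap]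
      exact hchi
    calc nu W' = nu ((V.map (Submodule.mkQ U)).map gbar) := by rw [hW'alt]
    _ ≤ nu (V.map (Submodule.mkQ U)) := nu_map_le _ _
    _ ≤ b2 := hnuV
  -- put everything together
  calc nu U ≤ nu A := hnak
  _ ≤ nu W' + nu (A.map (Submodule.mkQ W')) := hsplit
  _ ≤ b2 + a1 := Nat.add_le_add hwpiece hqpiece
  _ ≤ t * lam := by omega

end KeyLemma
section Monomials
open Submodule

variable {R : Type*} [CommRing R]

noncomputable def monomProd {e : ℕ} (y : Fin e → R) {i : ℕ} (s : Sym (Fin e) i) : R :=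
  ((s : Multiset (Fin e)).map y).prod

lemma span_pow_eq_span_monom {e : ℕ} (y : Fin e → R) (i : ℕ) :
    (Ideal.span (Set.range y)) ^ i = Ideal.span (Set.range (monomProd y (i := i))) := by
  induction i with
  | zero =>
    rw [pow_zero]
    symm
    rw [Ideal.one_eq_top, Ideal.eq_top_iff_one]
    refine Ideal.subset_span ⟨Sym.nil, ?_⟩
    simp [monomProd]
  | succ i ih =>
    rw [pow_succ', ih, Ideal.span_mul_span']
    congr 1
    ext r
    simp only [Set.mem_mul, Set.mem_range]
    constructor
    · rintro ⟨a, ⟨j, rfl⟩, b, ⟨s, rfl⟩, rfl⟩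
      refine ⟨j ::ₛ s, ?_⟩
      rw [monomProd, monomProd, Sym.coe_cons, Multiset.map_cons, Multiset.prod_cons]
    · rintro ⟨s, rfl⟩
      obtain ⟨j, u, rfl⟩ := Sym.exists_eq_cons_of_succ s
      refine ⟨y j, ⟨j, rfl⟩, monomProd y u, ⟨u, rfl⟩, ?_⟩
      rw [monomProd, monomProd, Sym.coe_cons, Multiset.map_cons, Multiset.prod_cons]

lemma nu_span_pow_le [IsNoetherianRing R] {e : ℕ} (y : Fin e → R) (i : ℕ) :
    nu ((Ideal.span (Set.range y) : Ideal R) ^ i) ≤ (e + i - 1).choose i := by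
  classical
  have h := span_pow_eq_span_monom y i
  have hfin : ((Finset.univ.image (monomProd y (i := i)) : Finset R) : Set R) =
      Set.range (monomProd y (i := i)) := by
    simp
  have hcard := nu_le_card ((Ideal.span (Set.range y) : Ideal R) ^ i)
    (Finset.univ.image (monomProd y (i := i))) (by rw [hfin]; exact h.symm)
  refine le_trans hcard (le_trans Finset.card_image_le ?_)
  rw [Finset.card_univ, Sym.card_sym_eq_multichoose, Fintype.card_fin, Nat.multichoose_eq]

lemma sum_choose_le (e n : ℕ) (hn : 1 ≤ n) :
    ∑ i ∈ Finset.range n, (e + i - 1).choose i ≤ (e + n - 1).choose e := by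
  rcases e with _ | e'
  · -- e = 0
    have hval : ∀ i ∈ Finset.range n, i ≠ 0 → (0 + i - 1).choose i = 0 := by
      intro i _ hi
      exact Nat.choose_eq_zero_of_lt (by omega)
    rw [Finset.sum_eq_single_of_mem 0 (Finset.mem_range.mpr (by omega)) hval]
    simp
  · -- e = e' + 1
    have key : ∀ m : ℕ, ∑ i ∈ Finset.range m, (e' + 1 + i - 1).choose i =
        (e' + 1 + m - 1).choose (e' + 1) := by
      intro m
      induction m with
      | zero => simp [Nat.choose_eq_zero_of_lt]
      | succ m ih =>
        rw [Finset.sum_range_succ, ih]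
        have h1 : e' + 1 + m - 1 = e' + m := by omega
        have h2 : e' + 1 + (m + 1) - 1 = e' + m + 1 := by omega
        rw [h1, h2]
        have h3 : (e' + m).choose m = (e' + m).choose e' := by
          have := Nat.choose_symm (Nat.le_add_left m e')
          simpa using this.symm
        rw [h3]
        have h4 : (e' + m + 1).choose (e' + 1) = (e' + m).choose e' + (e' + m).choose (e' + 1) :=
          Nat.choose_succ_succ _ _
        omega
    exact le_of_eq (key n)

end Monomials

/-- Let `(R, m)` be a Noetherian local ring of dimension `d ≥ 1` with infinite residue field,
`I` an `m`-primary ideal and `J` a minimal reduction of `I` generated by a system of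
parameters `x₁, …, x_d`. Then for every `n ≥ 1`,
`ν(Iⁿ) ≤ C(d+n−2, d−2) + λ(R/J)·C(d+n−2, d−1)`. -/
theorem nu_pow_le_choose_bound
    (R : Type*) [CommRing R] [IsNoetherianRing R] [IsLocalRing R]
    [Infinite (ResidueField R)]
    (d : ℕ) (hd : 1 ≤ d) (hdim : ringKrullDim R = d)
    (I : Ideal R) (hI : I.radical = maximalIdeal R)
    (J : Ideal R) (x : Fin d → R) (hJx : J = Ideal.span (Set.range x))
    (hJ : J.radical = maximalIdeal R) (hred : IsReduction J I)
    (lam : ℕ) (hlam : mLength R (R ⧸ J) = (lam : WithBot ℕ∞))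
    (n : ℕ) (hn : 1 ≤ n) :
    nu (I ^ n) ≤ (d + n - 2).choose (d - 2) + lam * (d + n - 2).choose (d - 1) := by
  classical
  obtain ⟨e, rfl⟩ : ∃ e, d = e + 1 := ⟨d - 1, by omega⟩
  set y : Fin e → R := fun j => x (Fin.castSucc j) with hy
  set xd : R := x (Fin.last e) with hxd
  set L : Ideal R := Ideal.span (Set.range y) with hL
  have hJL : J = L ⊔ Ideal.span {xd} := by
    rw [hJx]
    have hrange : Set.range x = Set.range y ∪ {xd} := by
      ext r
      constructor
      · rintro ⟨i, rfl⟩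
        rcases Fin.eq_castSucc_or_eq_last i with ⟨j, rfl⟩ | rfl
        · exact Or.inl ⟨j, rfl⟩
        · exact Or.inr rfl
      · rintro (⟨j, rfl⟩ | h)
        · exact ⟨Fin.castSucc j, rfl⟩
        · exact ⟨Fin.last e, by rw [Set.mem_singleton_iff.mp h]⟩
    rw [hrange, Ideal.span_union]
  have hxdm : xd ∈ IsLocalRing.maximalIdeal R := by
    have h1 : xd ∈ J := by
      rw [hJL]
      exact Submodule.mem_sup_right (Ideal.subset_span rfl)
    exact (le_trans Ideal.le_radical (le_of_eq hJ)) h1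
  have hredu : J ≤ I ∧ ∃ n, I ^ (n + 1) = J * I ^ n := hred
  have hJI : J ≤ I := hredu.1
  have hLI : L ≤ I := le_trans (by rw [hJL]; exact le_sup_left) hJI
  have hlam' : mLength R (R ⧸ J) ≤ (lam : WithBot ℕ∞) := le_of_eq hlam
  have hLn_le : L ^ n ≤ I ^ n := Ideal.pow_right_mono hLI n
  -- single step of the filtration
  have hstep : ∀ i : ℕ, nu ((I ^ n ⊓ L ^ i : Ideal R)) ≤
      nu ((I ^ n ⊓ L ^ (i + 1) : Ideal R)) + (e + i - 1).choose i * lam := by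
    intro i
    have hsplit := nu_le_inf_ker_add_map ((L ^ (i + 1) : Ideal R).mkQ) (I ^ n ⊓ L ^ i)
    rw [Submodule.ker_mkQ] at hsplit
    have hinf : (I ^ n ⊓ L ^ i : Ideal R) ⊓ (L ^ (i + 1) : Ideal R)
        = I ^ n ⊓ L ^ (i + 1) := by
      rw [inf_assoc, inf_eq_right.mpr (Ideal.pow_le_pow_right (by omega))]
    rw [hinf] at hsplit
    refine le_trans hsplit (Nat.add_le_add_left ?_ _)
    have hUE : Submodule.map ((L ^ (i + 1) : Ideal R)).mkQ (I ^ n ⊓ L ^ i) ≤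
        Submodule.map ((L ^ (i + 1) : Ideal R)).mkQ (L ^ i) := Submodule.map_mono inf_le_right
    have hkill : ∀ a ∈ L, ∀ m ∈ Submodule.map ((L ^ (i + 1) : Ideal R)).mkQ (L ^ i),
        a • m = (0 : R ⧸ (L ^ (i + 1) : Ideal R)) := by
      rintro a ha _ ⟨r, hr, rfl⟩
      simp only [Submodule.mkQ_apply]
      rw [← Submodule.Quotient.mk_smul, Submodule.Quotient.mk_eq_zero]
      have : a * r ∈ L ^ (i + 1) := by
        rw [pow_succ']
        exact Ideal.mul_mem_mul ha hr
      simpa [smul_eq_mul] using this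
    have hKL := key_nu_le L xd hxdm J hJL hlam' _ _ hUE hkill
    refine le_trans hKL ?_
    have hE : nu (Submodule.map ((L ^ (i + 1) : Ideal R)).mkQ (L ^ i)) ≤ (e + i - 1).choose i :=
      le_trans (nu_map_le _ _) (nu_span_pow_le y i)
    exact Nat.mul_le_mul_right _ hE
  -- iterate
  have hchain : ∀ j : ℕ, nu (I ^ n) ≤ nu ((I ^ n ⊓ L ^ j : Ideal R)) +
      ∑ i ∈ Finset.range j, (e + i - 1).choose i * lam := by
    intro j
    induction j with
    | zero => simp
    | succ j ih =>
      refine le_trans ih ?_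
      rw [Finset.sum_range_succ]
      have := hstep j
      omega
  have hfinal := hchain n
  rw [inf_eq_right.mpr hLn_le] at hfinal
  -- numerics
  have harith1 : e + 1 + n - 2 = e + n - 1 := by omega
  have harith2 : e + 1 - 2 = e - 1 := by omega
  have harith3 : e + 1 - 1 = e := by omega
  have h1 : nu ((L : Ideal R) ^ n) ≤ (e + 1 + n - 2).choose (e + 1 - 2) := by
    refine le_trans (nu_span_pow_le y n) ?_
    rw [harith1, harith2]
    rcases e with _ | e'
    · exact le_trans (le_of_eq (Nat.choose_eq_zero_of_lt (by omega))) (by omega)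
    · have := Nat.choose_symm (Nat.le_add_left n e')
      have heq : e' + 1 + n - 1 = e' + n := by omega
      rw [heq]
      have heq2 : e' + n - n = e' := by omega
      rw [heq2] at this
      have heq3 : e' + 1 - 1 = e' := by omega
      rw [heq3, ← this]
  have h2 : ∑ i ∈ Finset.range n, (e + i - 1).choose i * lam
      ≤ lam * (e + 1 + n - 2).choose (e + 1 - 1) := by
    rw [← Finset.sum_mul, harith1, harith3, mul_comm]
    exact Nat.mul_le_mul_left _ (sum_choose_le e n hn)
  omega
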